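/- arXiv:2401.07455 — 2 statements merged into one kernel-verified Lean document; each statement's English description precedes it below -/
import Mathlib

section
/- Suppose the user at position j of the equilibrium profile s^e deviates to a time s′ whose position o′ in the deviated profile satisfies 2 ≤ o′ < j (i.e., the deviator overtakes some users but does not become the first to depart). Then the deviator's new trip cost satisfies C′ > ρ − m(β+γ)/μ; in particular the cost improvement ρ − C′ is strictly less than m(β+γ)/μ, hence strictly less than m(1+γ)/μ. -/
/-- Schedule delay cost function `V(d) = β·max(−d,0) + γ·max(d,0)`. -/
noncomputable def sdc (β γ d : ℝ) : ℝ := β * max (-d) 0 + γ * max d 0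

/-- Destination arrival times: `d 0 = s 0`, `d (k+1) = max (d k + m/μ) (s (k+1))`. -/
noncomputable def arr (m μ : ℝ) (s : ℕ → ℝ) : ℕ → ℝ
  | 0 => s 0
  | k + 1 => max (arr m μ s k + m / μ) (s (k + 1))

/-- Trip cost of the `k`-th departing user. -/
noncomputable def cost (β γ m μ : ℝ) (s : ℕ → ℝ) (k : ℕ) : ℝ :=
  (arr m μ s k - s k) + sdc β γ (arr m μ s k)

/-- A time profile: strictly increasing departure times (0-indexed, users `0,…,P-1`). -/
def IsProfile (P : ℕ) (s : ℕ → ℝ) : Prop := ∀ i, i + 1 < P → s i < s (i + 1)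

/-- Equilibrium departure time of the first user. -/
noncomputable def tminus (P : ℕ) (m μ β γ : ℝ) : ℝ :=
  -(m * ((P : ℝ) - 1) / μ) * (γ / (β + γ))

/-- Equilibrium departure time of the last user. -/
noncomputable def tplus (P : ℕ) (m μ β γ : ℝ) : ℝ :=
  tminus P m μ β γ + m * ((P : ℝ) - 1) / μ

/-- Equilibrium trip cost. -/
noncomputable def rho (P : ℕ) (m μ β γ : ℝ) : ℝ :=
  (m * ((P : ℝ) - 1) / μ) * (β * γ / (β + γ))

/-- The equilibrium profile `s^e` (0-indexed: index `k` is the `(k+1)`-st departing user). -/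
noncomputable def se (P : ℕ) (m μ β γ : ℝ) (k : ℕ) : ℝ :=
  if (k : ℤ) ≤ ⌊γ * ((P : ℝ) - 1) / (β + γ)⌋ then
    tminus P m μ β γ + (m * (1 - β) / μ) * (k : ℝ)
  else
    tminus P m μ β γ + (m * (1 + γ) / μ) * (k : ℝ) - m * γ * ((P : ℝ) - 1) / μ

lemma se_strictMono (P : ℕ) (m μ β γ : ℝ) (hm : 0 < m) (hμ : 0 < μ)
    (hβ : 0 < β) (hβ1 : β < 1) (hγ : 0 < γ) :
    StrictMono (se P m μ β γ) := by
  have hbg : 0 < β + γ := by linarith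
  have hmμ : 0 < m / μ := div_pos hm hμ
  apply strictMono_nat_of_lt_succ
  intro k
  have hcast : (((k + 1 : ℕ)) : ℤ) = (k : ℤ) + 1 := by push_cast; ring
  have hcast2 : (((k + 1 : ℕ)) : ℝ) = (k : ℝ) + 1 := by push_cast; ring
  unfold se
  rw [hcast, hcast2]
  by_cases hk1 : (k : ℤ) + 1 ≤ ⌊γ * ((P : ℝ) - 1) / (β + γ)⌋
  · rw [if_pos (by omega : (k:ℤ) ≤ _), if_pos hk1]
    have : 0 < m * (1 - β) / μ := div_pos (mul_pos hm (by linarith)) hμ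
    nlinarith
  · by_cases hk : (k : ℤ) ≤ ⌊γ * ((P : ℝ) - 1) / (β + γ)⌋
    · rw [if_pos hk, if_neg hk1]
      have hkF : (k : ℤ) = ⌊γ * ((P : ℝ) - 1) / (β + γ)⌋ := by omega
      have hlow : γ * ((P : ℝ) - 1) / (β + γ) - 1 < (k : ℝ) := by
        have := Int.sub_one_lt_floor (γ * ((P : ℝ) - 1) / (β + γ))
        rw [← hkF] at this
        exact_mod_cast this
      have key : (β + γ) * (γ * ((P : ℝ) - 1) / (β + γ)) = γ * ((P : ℝ) - 1) := by
        field_simp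
      have h2 : γ * ((P : ℝ) - 1) - (β + γ) < (β + γ) * (k : ℝ) := by nlinarith
      have hb : 0 < (β + γ) * (k : ℝ) + 1 + γ - γ * ((P : ℝ) - 1) := by nlinarith
      have hid : m * (1 + γ) / μ * ((k : ℝ) + 1) - m * γ * ((P : ℝ) - 1) / μ -
          m * (1 - β) / μ * (k : ℝ) =
          m / μ * ((β + γ) * (k : ℝ) + 1 + γ - γ * ((P : ℝ) - 1)) := by ring
      linarith [mul_pos hmμ hb]
    · rw [if_neg hk, if_neg hk1]
      have : 0 < m * (1 + γ) / μ := div_pos (mul_pos hm (by linarith)) hμ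
      nlinarith

lemma se_le_line (P : ℕ) (m μ β γ : ℝ) (hm : 0 < m) (hμ : 0 < μ)
    (hβ : 0 < β) (hβ1 : β < 1) (hγ : 0 < γ) (k : ℕ) (hk : (k : ℝ) ≤ (P : ℝ) - 1) :
    se P m μ β γ k ≤ tminus P m μ β γ + (k : ℝ) * (m / μ) := by
  have hmμ : 0 < m / μ := div_pos hm hμ
  have hk0 : (0 : ℝ) ≤ (k : ℝ) := Nat.cast_nonneg k
  unfold se
  split_ifs with h
  · have hid : tminus P m μ β γ + (k : ℝ) * (m / μ) -
        (tminus P m μ β γ + m * (1 - β) / μ * (k : ℝ)) = m / μ * (β * (k : ℝ)) := by ring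
    nlinarith [mul_nonneg hmμ.le (mul_nonneg hβ.le hk0)]
  · have hid : tminus P m μ β γ + (k : ℝ) * (m / μ) -
        (tminus P m μ β γ + m * (1 + γ) / μ * (k : ℝ) - m * γ * ((P : ℝ) - 1) / μ) =
        m / μ * (γ * (((P : ℝ) - 1) - (k : ℝ))) := by ring
    nlinarith [mul_nonneg hmμ.le (mul_nonneg hγ.le (by linarith : (0:ℝ) ≤ ((P : ℝ) - 1) - (k : ℝ)))]

lemma eq_cost (P : ℕ) (m μ β γ : ℝ) (hm : 0 < m) (hμ : 0 < μ)
    (hβ : 0 < β) (hβ1 : β < 1) (hγ : 0 < γ) (k : ℕ) :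
    (tminus P m μ β γ + (k : ℝ) * (m / μ) - se P m μ β γ k) +
      sdc β γ (tminus P m μ β γ + (k : ℝ) * (m / μ)) = rho P m μ β γ := by
  have hbg : 0 < β + γ := by linarith
  have hmμ : 0 < m / μ := div_pos hm hμ
  have htm : tminus P m μ β γ = -(m / μ) * (γ * ((P : ℝ) - 1) / (β + γ)) := by
    unfold tminus; field_simp
  unfold se
  split_ifs with h
  · have hx : (k : ℝ) ≤ γ * ((P : ℝ) - 1) / (β + γ) := by
      have := Int.le_floor.mp h
      exact_mod_cast this
    have hD : tminus P m μ β γ + (k : ℝ) * (m / μ) ≤ 0 := by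
      rw [htm]
      nlinarith [mul_le_mul_of_nonneg_left hx hmμ.le]
    unfold sdc
    rw [max_eq_left (by linarith : (0:ℝ) ≤ -(tminus P m μ β γ + (k : ℝ) * (m / μ))),
      max_eq_right hD]
    unfold tminus rho
    field_simp
    ring
  · have hx : γ * ((P : ℝ) - 1) / (β + γ) < (k : ℝ) := by
      have := Int.floor_lt.mp (by omega : ⌊γ * ((P : ℝ) - 1) / (β + γ)⌋ < (k : ℤ))
      exact_mod_cast this
    have hD : 0 ≤ tminus P m μ β γ + (k : ℝ) * (m / μ) := by
      rw [htm]
      nlinarith [mul_le_mul_of_nonneg_left hx.le hmμ.le]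
    unfold sdc
    rw [max_eq_right (by linarith : -(tminus P m μ β γ + (k : ℝ) * (m / μ)) ≤ 0),
      max_eq_left hD]
    unfold tminus rho
    field_simp
    ring

theorem deviation_overtaking_bound (P : ℕ) (hP : 2 ≤ P) (m μ β γ : ℝ)
    (hm : 0 < m) (hm1 : m ≤ 1) (hμ : 0 < μ)
    (hβ : 0 < β) (hβ1 : β < 1) (hγ : 0 < γ)
    (j : ℕ) (hj : j < P) (s' : ℝ)
    (hs' : ∀ k, k < P → k ≠ j → s' ≠ se P m μ β γ k)
    (sd : ℕ → ℝ) (hsd : IsProfile P sd)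
    (hmult : Multiset.map sd (Finset.range P).val =
      s' ::ₘ (Multiset.map (se P m μ β γ) (Finset.range P).val).erase (se P m μ β γ j))
    (o' : ℕ) (hso' : sd o' = s')
    (ho1 : 1 ≤ o') (ho2 : o' < j) :
    rho P m μ β γ - m * (β + γ) / μ < cost β γ m μ sd o' ∧
    rho P m μ β γ - cost β γ m μ sd o' < m * (β + γ) / μ ∧
    rho P m μ β γ - cost β γ m μ sd o' < m * (1 + γ) / μ := by
  have hse := se_strictMono P m μ β γ hm hμ hβ hβ1 hγ
  have ho'P : o' < P := lt_trans ho2 hj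
  -- sd is strictly increasing below P
  have hsdlt : ∀ i', ∀ i, i < i' → i' < P → sd i < sd i' := by
    intro i'
    induction i' with
    | zero => intro i h _; omega
    | succ n ih =>
      intro i h hn
      rcases Nat.lt_succ_iff_lt_or_eq.mp h with h' | h'
      · exact (ih i h' (by omega)).trans (hsd n hn)
      · subst h'; exact hsd i hn
  have hsdinj : ∀ a b, a < P → b < P → sd a = sd b → a = b := by
    intro a b ha hb hab
    rcases lt_trichotomy a b with h | h | h
    · exact absurd hab (ne_of_lt (hsdlt b a h hb))
    · exact h
    · exact absurd hab.symm (ne_of_lt (hsdlt a b h ha))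
  -- each non-deviator slot holds some equilibrium time with index ≠ j
  have hmem : ∀ i, i < P → i ≠ o' → ∃ k, k < P ∧ k ≠ j ∧ se P m μ β γ k = sd i := by
    intro i hiP hio
    have h1 : sd i ∈ Multiset.map sd (Finset.range P).val :=
      Multiset.mem_map_of_mem sd (Finset.mem_range.mpr hiP)
    rw [hmult] at h1
    rcases Multiset.mem_cons.mp h1 with h2 | h2
    · exact absurd (hsdinj i o' hiP ho'P (h2.trans hso'.symm)) hio
    · have hnd : (Multiset.map (se P m μ β γ) (Finset.range P).val).Nodup :=
        Multiset.Nodup.map hse.injective (Finset.range P).nodup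
      rcases (Multiset.Nodup.mem_erase_iff hnd).mp h2 with ⟨hne, h3⟩
      rcases Multiset.mem_map.mp h3 with ⟨k, hk, hkeq⟩
      refine ⟨k, Finset.mem_range.mp hk, ?_, hkeq⟩
      intro hkj
      exact hne (by rw [← hkeq, hkj])
  have hmem' : ∀ i, ∃ k, (i < P ∧ i ≠ o') →
      (k < P ∧ k ≠ j ∧ se P m μ β γ k = sd i) := by
    intro i
    by_cases h : i < P ∧ i ≠ o'
    · obtain ⟨k, hk⟩ := hmem i h.1 h.2; exact ⟨k, fun _ => hk⟩
    · exact ⟨0, fun hh => absurd hh h⟩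
  choose K hK using hmem'
  have hKlt : ∀ a b, a < b → b < P → a ≠ o' → b ≠ o' → K a < K b := by
    intro a b hab hbP ha hb
    have h1 := hK a ⟨lt_trans hab hbP, ha⟩
    have h2 := hK b ⟨hbP, hb⟩
    have : se P m μ β γ (K a) < se P m μ β γ (K b) := by
      rw [h1.2.2, h2.2.2]; exact hsdlt b a hab hbP
    exact hse.lt_iff_lt.mp this
  -- Claim A : s' < se o'
  have hA : s' < se P m μ β γ o' := by
    have hne : s' ≠ se P m μ β γ o' := hs' o' ho'P (Nat.ne_of_lt ho2)
    rcases lt_or_gt_of_ne hne with h | h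
    · exact h
    · exfalso
      have step1 : ∀ i, o' < i → i < P → i ≤ K i := by
        intro i
        induction i with
        | zero => omega
        | succ n ih =>
          intro h1 h2
          rcases Nat.lt_succ_iff_lt_or_eq.mp h1 with h' | h'
          · have ha := ih h' (by omega)
            have hb := hKlt n (n + 1) (by omega) h2 (by omega) (by omega)
            omega
          · have h3 : se P m μ β γ o' < se P m μ β γ (K (n + 1)) := by
              calc se P m μ β γ o' < s' := h
                _ = sd o' := hso'.symm
                _ < sd (n + 1) := hsdlt (n + 1) o' (by omega) h2
                _ = se P m μ β γ (K (n + 1)) := ((hK (n + 1) ⟨h2, by omega⟩).2.2).symm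
            have := hse.lt_iff_lt.mp h3
            omega
      have step2 : ∀ i, j ≤ i → i < P → i < K i := by
        intro i
        induction i with
        | zero => omega
        | succ n ih =>
          intro h1 h2
          rcases Nat.lt_succ_iff_lt_or_eq.mp (Nat.lt_succ_of_le h1) with h' | h'
          · have ha := ih (by omega) (by omega)
            have hb := hKlt n (n + 1) (by omega) h2 (by omega) (by omega)
            omega
          · have ha := step1 (n + 1) (by omega) h2
            have hb := (hK (n + 1) ⟨h2, by omega⟩).2.1
            omega
      have h4 := step2 (P - 1) (by omega) (by omega)
      have h5 := (hK (P - 1) ⟨by omega, by omega⟩).1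
      omega
  -- sd agrees with se below o'
  have hKge : ∀ i, i < o' → i ≤ K i := by
    intro i
    induction i with
    | zero => omega
    | succ n ih =>
      intro h1
      have ha := ih (by omega)
      have hb := hKlt n (n + 1) (by omega) (by omega) (by omega) (by omega)
      omega
  have hKtop : K (o' - 1) < o' := by
    have h3 : se P m μ β γ (K (o' - 1)) < se P m μ β γ o' := by
      calc se P m μ β γ (K (o' - 1)) = sd (o' - 1) := (hK (o' - 1) ⟨by omega, by omega⟩).2.2
        _ < sd o' := hsdlt o' (o' - 1) (by omega) ho'P
        _ = s' := hso'
        _ < se P m μ β γ o' := hA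
    exact hse.lt_iff_lt.mp h3
  have hKle : ∀ d, d < o' → K (o' - 1 - d) ≤ o' - 1 - d := by
    intro d
    induction d with
    | zero => intro _; simpa using (by omega : K (o' - 1) ≤ o' - 1)
    | succ n ih =>
      intro h1
      have ha := ih (by omega)
      have hb := hKlt (o' - 1 - (n + 1)) (o' - 1 - n) (by omega) (by omega)
        (by omega) (by omega)
      omega
  have hsd_eq : ∀ i, i < o' → sd i = se P m μ β γ i := by
    intro i hi
    have h1 := hKge i hi
    have h2 := hKle (o' - 1 - i) (by omega)
    have h3 : K i = i := by
      have : o' - 1 - (o' - 1 - i) = i := by omega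
      rw [this] at h2
      omega
    rw [← (hK i ⟨by omega, by omega⟩).2.2, h3]
  -- arrival times below o' are the equilibrium arrivals
  have hse0 : se P m μ β γ 0 = tminus P m μ β γ := by
    have hP1 : (0:ℝ) ≤ γ * ((P : ℝ) - 1) / (β + γ) := by
      have h2P : (2:ℝ) ≤ (P:ℝ) := by exact_mod_cast hP
      exact div_nonneg (mul_nonneg hγ.le (by linarith)) (by linarith)
    unfold se
    rw [if_pos (Int.le_floor.mpr (by exact_mod_cast hP1))]
    simp
  have harr : ∀ i, i < o' → arr m μ sd i = tminus P m μ β γ + (i : ℝ) * (m / μ) := by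
    intro i
    induction i with
    | zero =>
      intro _
      show sd 0 = _
      rw [hsd_eq 0 (by omega), hse0]
      simp
    | succ n ih =>
      intro h1
      show max (arr m μ sd n + m / μ) (sd (n + 1)) = _
      rw [ih (by omega), hsd_eq (n + 1) h1]
      have hle : se P m μ β γ (n + 1) ≤ tminus P m μ β γ + ((n + 1 : ℕ) : ℝ) * (m / μ) := by
        apply se_le_line P m μ β γ hm hμ hβ hβ1 hγ
        have : (n + 1 : ℕ) + 1 ≤ P := by omega
        have : ((n + 1 : ℕ) : ℝ) + 1 ≤ (P : ℝ) := by exact_mod_cast this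
        linarith
      rw [max_eq_left (by push_cast at hle ⊢; linarith)]
      push_cast
      ring
  -- the deviator's arrival time
  obtain ⟨n, rfl⟩ : ∃ n, o' = n + 1 := ⟨o' - 1, by omega⟩
  have hD : arr m μ sd (n + 1) = tminus P m μ β γ + ((n + 1 : ℕ) : ℝ) * (m / μ) := by
    show max (arr m μ sd n + m / μ) (sd (n + 1)) = _
    rw [harr n (by omega), hso']
    have hle : se P m μ β γ (n + 1) ≤ tminus P m μ β γ + ((n + 1 : ℕ) : ℝ) * (m / μ) := by
      apply se_le_line P m μ β γ hm hμ hβ hβ1 hγ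
      have : (n + 1 : ℕ) + 1 ≤ P := by omega
      have : ((n + 1 : ℕ) : ℝ) + 1 ≤ (P : ℝ) := by exact_mod_cast this
      linarith
    rw [max_eq_left (by push_cast at hle ⊢; linarith)]
    push_cast
    ring
  have hcost : cost β γ m μ sd (n + 1) =
      rho P m μ β γ + (se P m μ β γ (n + 1) - s') := by
    have hid := eq_cost P m μ β γ hm hμ hβ hβ1 hγ (n + 1)
    unfold cost
    rw [hD, hso']
    linarith
  have hpos : 0 < se P m μ β γ (n + 1) - s' := by linarith
  have hbpos : 0 < m * (β + γ) / μ := div_pos (mul_pos hm (by linarith)) hμ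
  have hlast : m * (β + γ) / μ < m * (1 + γ) / μ :=
    (div_lt_div_iff_of_pos_right hμ).mpr (by nlinarith)
  exact ⟨by linarith, by linarith, by linarith⟩
end

section
/- For every time profile s: if t⁻ ≤ s_1, then the trip cost of the last departing user satisfies C_P ≥ ρ; and if t⁻ < s_1, then C_P > ρ. -/
lemma arr_ge_s (m μ : ℝ) (s : ℕ → ℝ) (k : ℕ) : s k ≤ arr m μ s k := by
  cases k with
  | zero => simp [arr]
  | succ n => exact le_max_right _ _

lemma arr_ge_start (m μ : ℝ) (s : ℕ → ℝ) (k : ℕ) :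
    s 0 + k * (m / μ) ≤ arr m μ s k := by
  induction k with
  | zero => simp [arr]
  | succ n ih =>
      have h : s 0 + ((n : ℝ) + 1) * (m / μ) ≤ arr m μ s n + m / μ := by linarith
      calc s 0 + ((n + 1 : ℕ) : ℝ) * (m / μ) ≤ arr m μ s n + m / μ := by push_cast; linarith
        _ ≤ arr m μ s (n + 1) := le_max_left _ _

theorem last_user_cost_bound (P : ℕ) (hP : 2 ≤ P) (m μ β γ : ℝ)
    (hm : 0 < m) (hm1 : m ≤ 1) (hμ : 0 < μ)
    (hβ : 0 < β) (hβ1 : β < 1) (hγ : 0 < γ)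
    (s : ℕ → ℝ) (hs : IsProfile P s) :
    (tminus P m μ β γ ≤ s 0 → rho P m μ β γ ≤ cost β γ m μ s (P - 1)) ∧
    (tminus P m μ β γ < s 0 → rho P m μ β γ < cost β γ m μ s (P - 1)) := by
  set A : ℝ := m * ((P : ℝ) - 1) / μ with hA
  have hPc : ((P - 1 : ℕ) : ℝ) = (P : ℝ) - 1 := by
    have : (1 : ℕ) ≤ P := by omega
    push_cast [this]; ring
  have hP1 : (1 : ℝ) ≤ (P : ℝ) - 1 := by
    have : (2 : ℝ) ≤ (P : ℝ) := by exact_mod_cast hP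
    linarith
  have hA0 : 0 < A := by
    apply div_pos _ hμ
    nlinarith
  have hbg : 0 < β + γ := by linarith
  set d : ℝ := arr m μ s (P - 1) with hd
  have hdge : s 0 + A ≤ d := by
    have := arr_ge_start m μ s (P - 1)
    rw [hPc] at this
    calc s 0 + A = s 0 + ((P : ℝ) - 1) * (m / μ) := by rw [hA]; ring
      _ ≤ d := this
  have hcost : d - s (P - 1) + sdc β γ d = cost β γ m μ s (P - 1) := rfl
  have hsle : s (P - 1) ≤ d := arr_ge_s m μ s (P - 1)
  have htplus : tminus P m μ β γ + A = A * β / (β + γ) := by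
    rw [tminus, hA]
    field_simp
    ring
  have hrho : rho P m μ β γ = γ * (A * β / (β + γ)) := by
    rw [rho, hA]; field_simp
  have htp0 : 0 ≤ A * β / (β + γ) := by positivity
  constructor
  · intro h
    have hd0 : A * β / (β + γ) ≤ d := by rw [← htplus]; linarith
    have hd0' : 0 ≤ d := le_trans htp0 hd0
    have hsdc : sdc β γ d = γ * d := by
      rw [sdc, max_eq_right (by linarith : -d ≤ 0), max_eq_left hd0']; ring
    rw [← hcost, hsdc, hrho]
    have : γ * (A * β / (β + γ)) ≤ γ * d := by
      exact mul_le_mul_of_nonneg_left hd0 hγ.le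
    linarith
  · intro h
    have hd0 : A * β / (β + γ) < d := by rw [← htplus]; linarith
    have hd0' : 0 ≤ d := le_trans htp0 hd0.le
    have hsdc : sdc β γ d = γ * d := by
      rw [sdc, max_eq_right (by linarith : -d ≤ 0), max_eq_left hd0']; ring
    rw [← hcost, hsdc, hrho]
    have : γ * (A * β / (β + γ)) < γ * d := by
      exact mul_lt_mul_of_pos_left hd0 hγ
    linarith
end
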